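/- arXiv:1110.6821 — 4 statements merged into one kernel-verified Lean document; each statement's English description precedes it below -/
import Mathlib

section
/- Let 𝔥 be a Hoffman graph that has a representation of norm m. Then 𝔥 has a reduced representation of norm m, and the lattice Λ(𝔥, m) is isomorphic to the orthogonal direct sum Λ^red(𝔥, m) ⊕ ℤ^{|V_f(𝔥)|}. -/
attribute [local instance] Classical.propDecidable

open scoped RealInnerProductSpace

/-- A Hoffman graph: a graph together with a labeling of its vertices as fat or slim,
such that every fat vertex has a slim neighbor and fat vertices are pairwise nonadjacent. -/
structure HoffmanGraph (V : Type*) where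
  graph : SimpleGraph V
  IsFat : V → Prop
  fat_not_adj : ∀ {x y : V}, IsFat x → IsFat y → ¬ graph.Adj x y
  fat_slim_nbr : ∀ {x : V}, IsFat x → ∃ y : V, ¬ IsFat y ∧ graph.Adj x y

namespace HoffmanGraph

variable {V : Type*}

/-- A vertex is slim if it is not fat. -/
def IsSlim (H : HoffmanGraph V) (x : V) : Prop := ¬ H.IsFat x

/-- The type of slim vertices. -/
abbrev Slim (H : HoffmanGraph V) := {v : V // H.IsSlim v}

/-- The number of fat neighbors of a vertex. -/
noncomputable def fatDeg (H : HoffmanGraph V) (x : V) : ℕ :=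
  {f : V | H.IsFat f ∧ H.graph.Adj x f}.ncard

/-- The number of common fat neighbors of two vertices. -/
noncomputable def commonFat (H : HoffmanGraph V) (x y : V) : ℕ :=
  {f : V | H.IsFat f ∧ H.graph.Adj x f ∧ H.graph.Adj y f}.ncard

lemma commonFat_comm (H : HoffmanGraph V) (x y : V) :
    H.commonFat x y = H.commonFat y x := by
  unfold commonFat
  congr 1
  ext f
  simp only [Set.mem_setOf_eq]
  tauto

/-- A Hoffman graph is fat if every slim vertex has a fat neighbor. -/
def IsFatGraph (H : HoffmanGraph V) : Prop :=
  ∀ x, H.IsSlim x → ∃ f, H.IsFat f ∧ H.graph.Adj x f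

/-- A representation of norm `m`. -/
def IsRep (H : HoffmanGraph V) (m : ℝ) {E : Type*} [NormedAddCommGroup E]
    [InnerProductSpace ℝ E] (φ : V → E) : Prop :=
  (∀ x, H.IsSlim x → ⟪φ x, φ x⟫ = m) ∧
  (∀ x, H.IsFat x → ⟪φ x, φ x⟫ = 1) ∧
  (∀ x y, H.graph.Adj x y → ⟪φ x, φ y⟫ = 1) ∧
  (∀ x y, x ≠ y → ¬ H.graph.Adj x y → ⟪φ x, φ y⟫ = 0)

/-- A reduced representation of norm `m` (only the values on slim vertices matter). -/
def IsReducedRep (H : HoffmanGraph V) (m : ℝ) {E : Type*} [NormedAddCommGroup E]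
    [InnerProductSpace ℝ E] (ψ : V → E) : Prop :=
  (∀ x, H.IsSlim x → ⟪ψ x, ψ x⟫ = m - H.fatDeg x) ∧
  (∀ x y, H.IsSlim x → H.IsSlim y → H.graph.Adj x y → ⟪ψ x, ψ y⟫ = 1 - H.commonFat x y) ∧
  (∀ x y, H.IsSlim x → H.IsSlim y → x ≠ y → ¬ H.graph.Adj x y →
    ⟪ψ x, ψ y⟫ = - (H.commonFat x y : ℝ))

/-- The matrix B(𝔥) = A_s − C Cᵀ, indexed by the slim vertices. -/
noncomputable def matrixB (H : HoffmanGraph V) : Matrix H.Slim H.Slim ℝ :=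
  fun x y => (if H.graph.Adj x.1 y.1 then (1 : ℝ) else 0) - (H.commonFat x.1 y.1 : ℝ)

/-- The smallest eigenvalue of a Hoffman graph. -/
noncomputable def lambdaMin (H : HoffmanGraph V) [Fintype V] : ℝ :=
  sInf (spectrum ℝ H.matrixB)

/-- A subset of the vertices induces a Hoffman graph iff every fat vertex of it retains
a slim neighbor inside it. -/
def IsGoodSubset (H : HoffmanGraph V) (S : Set V) : Prop :=
  ∀ x ∈ S, H.IsFat x → ∃ y ∈ S, ¬ H.IsFat y ∧ H.graph.Adj x y

/-- The induced Hoffman subgraph on a good subset. -/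
def induce (H : HoffmanGraph V) (S : Set V) (hS : H.IsGoodSubset S) : HoffmanGraph S where
  graph := H.graph.induce S
  IsFat := fun x => H.IsFat x.1
  fat_not_adj := by
    intro x y hx hy hadj
    exact H.fat_not_adj hx hy hadj
  fat_slim_nbr := by
    rintro ⟨x, hxS⟩ hx
    obtain ⟨y, hyS, hy, hadj⟩ := hS x hxS hx
    exact ⟨⟨y, hyS⟩, hy, hadj⟩

/-- An (abstract) induced Hoffman subgraph relation between Hoffman graphs. -/
def IsInducedSubgraphOf {V₁ V₂ : Type*} (H₁ : HoffmanGraph V₁) (H₂ : HoffmanGraph V₂) : Prop :=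
  ∃ e : V₁ ↪ V₂, (∀ x y, H₂.graph.Adj (e x) (e y) ↔ H₁.graph.Adj x y) ∧
    (∀ x, H₂.IsFat (e x) ↔ H₁.IsFat x)

/-- Isomorphism of Hoffman graphs. -/
def IsIsoTo {V₁ V₂ : Type*} (H₁ : HoffmanGraph V₁) (H₂ : HoffmanGraph V₂) : Prop :=
  ∃ e : V₁ ≃ V₂, (∀ x y, H₂.graph.Adj (e x) (e y) ↔ H₁.graph.Adj x y) ∧
    (∀ x, H₂.IsFat (e x) ↔ H₁.IsFat x)

/-- `H` is the sum of its induced subgraphs on `W₁` and `W₂`. -/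
structure IsSum (H : HoffmanGraph V) (W₁ W₂ : Set V) : Prop where
  nonempty₁ : W₁.Nonempty
  nonempty₂ : W₂.Nonempty
  good₁ : H.IsGoodSubset W₁
  good₂ : H.IsGoodSubset W₂
  union_eq : W₁ ∪ W₂ = Set.univ
  slim_partition : ∀ v, H.IsSlim v → (v ∈ W₁ ↔ v ∉ W₂)
  fat_closed₁ : ∀ x ∈ W₁, H.IsSlim x → ∀ f, H.IsFat f → H.graph.Adj x f → f ∈ W₁
  fat_closed₂ : ∀ x ∈ W₂, H.IsSlim x → ∀ f, H.IsFat f → H.graph.Adj x f → f ∈ W₂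
  common_le : ∀ x ∈ W₁, ∀ y ∈ W₂, H.IsSlim x → H.IsSlim y → H.commonFat x y ≤ 1
  common_iff : ∀ x ∈ W₁, ∀ y ∈ W₂, H.IsSlim x → H.IsSlim y →
    (H.commonFat x y = 1 ↔ H.graph.Adj x y)

/-- `H` is decomposable if it is the sum of two nonempty induced Hoffman subgraphs. -/
def Decomposable (H : HoffmanGraph V) : Prop := ∃ W₁ W₂ : Set V, H.IsSum W₁ W₂

def Indecomposable (H : HoffmanGraph V) : Prop := ¬ H.Decomposable

/-- `H` is the sum of the family of its induced subgraphs on `W i`. -/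
structure IsSumFamily (H : HoffmanGraph V) {n : ℕ} (W : Fin n → Set V) : Prop where
  nonempty : ∀ i, (W i).Nonempty
  good : ∀ i, H.IsGoodSubset (W i)
  union_eq : ⋃ i, W i = Set.univ
  slim_mem_unique : ∀ v, H.IsSlim v → ∃! i, v ∈ W i
  fat_closed : ∀ i, ∀ x ∈ W i, H.IsSlim x → ∀ f, H.IsFat f → H.graph.Adj x f → f ∈ W i
  common_le : ∀ i j, i ≠ j → ∀ x ∈ W i, ∀ y ∈ W j, H.IsSlim x → H.IsSlim y →
    H.commonFat x y ≤ 1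
  common_iff : ∀ i j, i ≠ j → ∀ x ∈ W i, ∀ y ∈ W j, H.IsSlim x → H.IsSlim y →
    (H.commonFat x y = 1 ↔ H.graph.Adj x y)

/-- Attach a new fat vertex (the `none` vertex) adjacent exactly to the slim vertices in `S`. -/
def attachFat (H : HoffmanGraph V) (S : Set V) (hne : S.Nonempty)
    (hslim : ∀ v ∈ S, H.IsSlim v) : HoffmanGraph (Option V) where
  graph := {
    Adj := fun a b =>
      match a, b with
      | none, none => False
      | none, some v => v ∈ S
      | some v, none => v ∈ S
      | some u, some v => H.graph.Adj u v
    symm := by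
      constructor
      rintro (_|u) (_|v) h
      · exact h.elim
      · exact h
      · exact h
      · exact h.symm
    loopless := by
      constructor
      rintro (_|u) h
      · exact h.elim
      · exact H.graph.loopless.irrefl u h }
  IsFat := fun a => match a with | none => True | some v => H.IsFat v
  fat_not_adj := by
    rintro (_|u) (_|v) hu hv h
    · exact h.elim
    · exact (hslim v h) hv
    · exact (hslim u h) hu
    · exact H.fat_not_adj hu hv h
  fat_slim_nbr := by
    rintro (_|u) hu
    · obtain ⟨s, hs⟩ := hne
      exact ⟨some s, hslim s hs, hs⟩
    · obtain ⟨y, hy, hadj⟩ := H.fat_slim_nbr hu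
      exact ⟨some y, hy, hadj⟩

/-- `H` is `μ`-saturated: it has smallest eigenvalue at least `μ` and no fat vertex can be
attached while keeping the smallest eigenvalue at least `μ`. -/
def IsSaturated (H : HoffmanGraph V) [Fintype V] (μ : ℝ) : Prop :=
  μ ≤ H.lambdaMin ∧
  ∀ (S : Set V) (hne : S.Nonempty) (hslim : ∀ v ∈ S, H.IsSlim v),
    ¬ (μ ≤ (H.attachFat S hne hslim).lambdaMin)

/-- The special graph `S⁻(𝔥)`: slim vertices, adjacent when the inner product of their
reduced representations is negative. -/
noncomputable def specialMinus (H : HoffmanGraph V) : SimpleGraph H.Slim where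
  Adj x y := x ≠ y ∧
    ((H.graph.Adj x.1 y.1 ∧ (1 : ℝ) - (H.commonFat x.1 y.1 : ℝ) < 0) ∨
     (¬ H.graph.Adj x.1 y.1 ∧ -(H.commonFat x.1 y.1 : ℝ) < 0))
  symm := by
    constructor
    rintro x y ⟨hne, h⟩
    refine ⟨hne.symm, ?_⟩
    rw [H.commonFat_comm y.1 x.1]
    rcases h with ⟨ha, hl⟩ | ⟨ha, hl⟩
    · exact Or.inl ⟨ha.symm, hl⟩
    · exact Or.inr ⟨fun hadj => ha hadj.symm, hl⟩
  loopless := ⟨fun x h => h.1 rfl⟩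

/-- The special graph `S⁺(𝔥)`: slim vertices, adjacent when the inner product of their
reduced representations is positive. -/
noncomputable def specialPlus (H : HoffmanGraph V) : SimpleGraph H.Slim where
  Adj x y := x ≠ y ∧
    ((H.graph.Adj x.1 y.1 ∧ 0 < (1 : ℝ) - (H.commonFat x.1 y.1 : ℝ)) ∨
     (¬ H.graph.Adj x.1 y.1 ∧ 0 < -(H.commonFat x.1 y.1 : ℝ)))
  symm := by
    constructor
    rintro x y ⟨hne, h⟩
    refine ⟨hne.symm, ?_⟩
    rw [H.commonFat_comm y.1 x.1]
    rcases h with ⟨ha, hl⟩ | ⟨ha, hl⟩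
    · exact Or.inl ⟨ha.symm, hl⟩
    · exact Or.inr ⟨fun hadj => ha hadj.symm, hl⟩
  loopless := ⟨fun x h => h.1 rfl⟩

/-- The special graph `S(𝔥)`, the union of `S⁻(𝔥)` and `S⁺(𝔥)`. -/
noncomputable def special (H : HoffmanGraph V) : SimpleGraph H.Slim :=
  H.specialMinus ⊔ H.specialPlus

/-- `⟨S⟩_𝔥`: the set `S` together with all fat neighbors of its members. -/
def closureSet (H : HoffmanGraph V) (S : Set V) : Set V :=
  S ∪ {f | H.IsFat f ∧ ∃ x ∈ S, H.graph.Adj x f}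

/-- The Hoffman graph `𝔥^(t)` with one slim vertex (`none`) and `t` fat vertices. -/
def manyFat (t : ℕ) : HoffmanGraph (Option (Fin t)) where
  graph := {
    Adj := fun a b => (a = none ∧ b ≠ none) ∨ (a ≠ none ∧ b = none)
    symm := by
      constructor
      rintro a b (⟨h1, h2⟩ | ⟨h1, h2⟩)
      · exact Or.inr ⟨h2, h1⟩
      · exact Or.inl ⟨h2, h1⟩
    loopless := by
      constructor
      rintro a (⟨h1, h2⟩ | ⟨h1, h2⟩)
      · exact h2 h1
      · exact h1 h2 }
  IsFat := fun a => a ≠ none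
  fat_not_adj := by
    rintro a b ha hb (⟨h1, _⟩ | ⟨_, h1⟩)
    · exact ha h1
    · exact hb h1
  fat_slim_nbr := by
    intro a ha
    refine ⟨none, by simp, Or.inr ⟨ha, rfl⟩⟩

/-- An ordinary (slim) graph regarded as a Hoffman graph. -/
def ofSimple {W : Type*} (G : SimpleGraph W) : HoffmanGraph W where
  graph := G
  IsFat := fun _ => False
  fat_not_adj := by intro x y hx _ _; exact hx
  fat_slim_nbr := by intro x hx; exact hx.elim

end HoffmanGraph
namespace HoffmanGraph

variable {V : Type*}

/-- The Hoffman graph obtained by replacing the fat vertices `f i` by slim cliques of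
sizes `n i`, joining all neighbors of `f i` to all vertices of the `i`-th clique. -/
def blowup {k : ℕ} (H : HoffmanGraph V) (f : Fin k → V) (hf : ∀ i, H.IsFat (f i))
    (n : Fin k → ℕ) :
    HoffmanGraph ({v : V // v ∉ Set.range f} ⊕ (Σ i : Fin k, Fin (n i))) where
  graph := {
    Adj := fun a b =>
      match a, b with
      | .inl u, .inl v => H.graph.Adj u.1 v.1
      | .inl u, .inr x => H.graph.Adj u.1 (f x.1)
      | .inr x, .inl v => H.graph.Adj (f x.1) v.1
      | .inr x, .inr y => x ≠ y ∧ x.1 = y.1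
    symm := by
      constructor
      rintro (u|x) (v|y) h
      · exact h.symm
      · exact h.symm
      · exact h.symm
      · exact ⟨h.1.symm, h.2.symm⟩
    loopless := by
      constructor
      rintro (u|x) h
      · exact H.graph.loopless.irrefl _ h
      · exact h.1 rfl }
  IsFat := fun a => match a with | .inl u => H.IsFat u.1 | .inr _ => False
  fat_not_adj := by
    rintro (u|x) (v|y) hu hv h
    · exact H.fat_not_adj hu hv h
    · exact hv
    · exact hu
    · exact hu
  fat_slim_nbr := by
    rintro (u|x) hu
    · obtain ⟨y, hy, hadj⟩ := H.fat_slim_nbr hu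
      refine ⟨Sum.inl ⟨y, ?_⟩, hy, hadj⟩
      rintro ⟨i, rfl⟩
      exact hy (hf i)
    · exact hu.elim

/-- The slim graph obtained by replacing every fat vertex by a slim `n`-clique,
joining all neighbors of a fat vertex to all vertices of its clique. -/
def blowupAll (H : HoffmanGraph V) (n : ℕ) :
    HoffmanGraph (H.Slim ⊕ ({f : V // H.IsFat f} × Fin n)) where
  graph := {
    Adj := fun a b =>
      match a, b with
      | .inl u, .inl v => H.graph.Adj u.1 v.1
      | .inl u, .inr x => H.graph.Adj u.1 x.1.1
      | .inr x, .inl v => H.graph.Adj x.1.1 v.1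
      | .inr x, .inr y => x ≠ y ∧ x.1 = y.1
    symm := by
      constructor
      rintro (u|x) (v|y) h
      · exact h.symm
      · exact h.symm
      · exact h.symm
      · exact ⟨h.1.symm, h.2.symm⟩
    loopless := by
      constructor
      rintro (u|x) h
      · exact H.graph.loopless.irrefl _ h
      · exact h.1 rfl }
  IsFat := fun _ => False
  fat_not_adj := by intro x y hx _; exact hx.elim
  fat_slim_nbr := by intro x hx; exact hx.elim

/-- The Hoffman graph of Example 4.2: slim vertices `ℤ/4ℤ` (the `inl`'s), fat vertices
`f_j` for `j ∈ ℤ/4ℤ` (the `inr`'s), with edges `{0,2}`, `{1,3}` and `{i, f_j}` for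
`i = j` or `i = j + 1`. -/
def exampleA3tilde : HoffmanGraph (ZMod 4 ⊕ ZMod 4) where
  graph := {
    Adj := fun a b =>
      match a, b with
      | .inl i, .inl j => j = i + 2
      | .inl i, .inr j => i = j ∨ i = j + 1
      | .inr j, .inl i => i = j ∨ i = j + 1
      | .inr _, .inr _ => False
    symm := by
      have h4 : (2 : ZMod 4) + 2 = 0 := by decide
      constructor
      rintro (i|i) (j|j) h
      · have h' : j = i + 2 := h
        subst h'
        show i = i + 2 + 2
        rw [add_assoc, h4, add_zero]
      · exact h
      · exact h
      · exact h.elim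
    loopless := by
      constructor
      rintro (i|i) h
      · exact absurd (left_eq_add.mp h) (by decide)
      · exact h }
  IsFat := fun a => match a with | .inl _ => False | .inr _ => True
  fat_not_adj := by
    rintro (i|i) (j|j) hx hy h
    · exact hx
    · exact hx
    · exact hy
    · exact h
  fat_slim_nbr := by
    rintro (i|i) hx
    · exact hx.elim
    · exact ⟨Sum.inl i, id, Or.inl rfl⟩

end HoffmanGraph

/-- The extended Dynkin graph `D̃₄`, i.e. the star `K_{1,4}`. -/
def tildeD4Graph : SimpleGraph (Fin 5) := SimpleGraph.fromRel (fun a _ => a = 0)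

/-- The Dynkin graph `A_m`: the path on `m` vertices. -/
def dynkinA (m : ℕ) : SimpleGraph (Fin m) :=
  SimpleGraph.fromRel (fun i j => i.1 + 1 = j.1)

/-- The extended Dynkin graph `Ã_m`: the cycle on `m + 1` vertices. -/
def tildeA (m : ℕ) : SimpleGraph (ZMod (m + 1)) :=
  SimpleGraph.fromRel (fun i j => i + 1 = j)

/-- The Dynkin graph `D_m`: the path `1 - 2 - ⋯ - (m-1)` with the extra vertex `0`
attached to the vertex `2`. -/
def dynkinD (m : ℕ) : SimpleGraph (Fin m) :=
  SimpleGraph.fromRel (fun i j => (1 ≤ i.1 ∧ i.1 + 1 = j.1) ∨ (i.1 = 0 ∧ j.1 = 2))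

/-- The extended Dynkin graph `D̃_m` on `m + 1` vertices: the path `1 - 2 - ⋯ - (m-1)`
with the extra vertex `0` attached to `2` and the extra vertex `m` attached to `m - 2`. -/
def tildeD (m : ℕ) : SimpleGraph (Fin (m + 1)) :=
  SimpleGraph.fromRel (fun i j =>
    (1 ≤ i.1 ∧ i.1 + 1 = j.1 ∧ j.1 ≤ m - 1) ∨ (i.1 = 0 ∧ j.1 = 2) ∨ (i.1 = m ∧ j.1 = m - 2))
section Aux

namespace HG27

variable {V : Type} [Fintype V] (H : HoffmanGraph V) (m : ℝ) {d : ℕ}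
  (φ : V → EuclideanSpace ℝ (Fin d))

/-- The reduced representation candidate. -/
noncomputable def psi (x : V) : EuclideanSpace ℝ (Fin d) :=
  φ x - ∑ f : {f : V // H.IsFat f}, (if H.graph.Adj x f.1 then (1:ℝ) else 0) • φ f.1

variable {H m φ}

lemma zsmul_inner (n : ℤ) (x y : EuclideanSpace ℝ (Fin d)) :
    ⟪n • x, y⟫ = (n : ℝ) * ⟪x, y⟫ := by
  rw [← Int.cast_smul_eq_zsmul ℝ n x, real_inner_smul_left]

lemma ortho (hφ : H.IsRep m φ) {f g : V} (hf : H.IsFat f) (hg : H.IsFat g) :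
    ⟪φ f, φ g⟫ = if f = g then (1:ℝ) else 0 := by
  split_ifs with h
  · subst h; exact hφ.2.1 f hf
  · exact hφ.2.2.2 f g h (H.fat_not_adj hf hg)

lemma inner_slim_fat (hφ : H.IsRep m φ) {x f : V} (hx : H.IsSlim x) (hf : H.IsFat f) :
    ⟪φ x, φ f⟫ = if H.graph.Adj x f then (1:ℝ) else 0 := by
  split_ifs with h
  · exact hφ.2.2.1 x f h
  · exact hφ.2.2.2 x f (by rintro rfl; exact hx hf) h

lemma psi_inner_fat (hφ : H.IsRep m φ) {x f : V} (hx : H.IsSlim x) (hf : H.IsFat f) :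
    ⟪psi H φ x, φ f⟫ = 0 := by
  unfold psi
  rw [inner_sub_left, sum_inner, inner_slim_fat hφ hx hf]
  have key : ∀ g : {f : V // H.IsFat f},
      ⟪(if H.graph.Adj x g.1 then (1:ℝ) else 0) • φ g.1, φ f⟫
        = if g = (⟨f, hf⟩ : {f : V // H.IsFat f}) then
            (if H.graph.Adj x f then (1:ℝ) else 0) else 0 := by
    intro g
    rw [real_inner_smul_left, ortho hφ g.2 hf]
    by_cases h : g = (⟨f, hf⟩ : {f : V // H.IsFat f})
    · subst h; simp
    · have : g.1 ≠ f := fun hh => h (Subtype.ext hh)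
      simp [h, this]
  rw [Finset.sum_congr rfl (fun g _ => key g), Finset.sum_ite_eq' Finset.univ]
  simp

lemma sum_ind_eq_fatDeg (x : V) :
    ∑ f : {f : V // H.IsFat f}, (if H.graph.Adj x f.1 then (1:ℝ) else 0)
      = (H.fatDeg x : ℝ) := by
  have h1 : H.fatDeg x = (Finset.univ.filter (fun f => H.IsFat f ∧ H.graph.Adj x f)).card := by
    rw [HoffmanGraph.fatDeg, Set.ncard_eq_toFinset_card']
    congr 1
    ext f
    simp
  rw [h1]
  rw [Finset.card_filter]
  push_cast
  rw [← Finset.sum_subtype (Finset.univ.filter (fun f => H.IsFat f))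
    (p := fun f => H.IsFat f) (by simp) (fun f => if H.graph.Adj x f then (1:ℝ) else 0)]
  rw [Finset.sum_filter]
  apply Finset.sum_congr rfl
  intro f _
  by_cases hf : H.IsFat f <;> simp [hf]

lemma sum_ind_mul_eq_commonFat (x y : V) :
    ∑ f : {f : V // H.IsFat f}, (if H.graph.Adj x f.1 then (1:ℝ) else 0) *
      (if H.graph.Adj y f.1 then (1:ℝ) else 0) = (H.commonFat x y : ℝ) := by
  have h1 : H.commonFat x y
      = (Finset.univ.filter (fun f => H.IsFat f ∧ H.graph.Adj x f ∧ H.graph.Adj y f)).card := by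
    rw [HoffmanGraph.commonFat, Set.ncard_eq_toFinset_card']
    congr 1
    ext f
    simp
  rw [h1, Finset.card_filter]
  push_cast
  rw [← Finset.sum_subtype (Finset.univ.filter (fun f => H.IsFat f))
    (p := fun f => H.IsFat f) (by simp)
    (fun f => (if H.graph.Adj x f then (1:ℝ) else 0) * (if H.graph.Adj y f then (1:ℝ) else 0))]
  rw [Finset.sum_filter]
  apply Finset.sum_congr rfl
  intro f _
  by_cases hf : H.IsFat f
  · by_cases h2 : H.graph.Adj x f <;> by_cases h3 : H.graph.Adj y f <;> simp [hf, h2, h3]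
  · simp [hf]

lemma psi_inner_psi (hφ : H.IsRep m φ) {x y : V} (hx : H.IsSlim x) (hy : H.IsSlim y) :
    ⟪psi H φ x, psi H φ y⟫ = ⟪φ x, φ y⟫ - (H.commonFat x y : ℝ) := by
  have step1 : ⟪psi H φ x, psi H φ y⟫ = ⟪psi H φ x, φ y⟫
      - ∑ f : {f : V // H.IsFat f},
          (if H.graph.Adj y f.1 then (1:ℝ) else 0) * ⟪psi H φ x, φ f.1⟫ := by
    conv_lhs => rw [show psi H φ y = φ y - ∑ f : {f : V // H.IsFat f},
      (if H.graph.Adj y f.1 then (1:ℝ) else 0) • φ f.1 from rfl]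
    rw [inner_sub_right, inner_sum]
    congr 1
    apply Finset.sum_congr rfl
    intro f _
    rw [real_inner_smul_right]
  rw [step1]
  have hz : ∀ f : {f : V // H.IsFat f}, ⟪psi H φ x, φ f.1⟫ = 0 :=
    fun f => psi_inner_fat hφ hx f.2
  simp only [hz, mul_zero, Finset.sum_const_zero, sub_zero]
  unfold psi
  rw [inner_sub_left, sum_inner]
  have key : ∀ f : {f : V // H.IsFat f},
      ⟪(if H.graph.Adj x f.1 then (1:ℝ) else 0) • φ f.1, φ y⟫
        = (if H.graph.Adj x f.1 then (1:ℝ) else 0) *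
          (if H.graph.Adj y f.1 then (1:ℝ) else 0) := by
    intro f
    rw [real_inner_smul_left, real_inner_comm, inner_slim_fat hφ hy f.2]
  rw [Finset.sum_congr rfl (fun f _ => key f), sum_ind_mul_eq_commonFat]

lemma isReducedRep (hφ : H.IsRep m φ) : H.IsReducedRep m (psi H φ) := by
  refine ⟨?_, ?_, ?_⟩
  · intro x hx
    rw [psi_inner_psi hφ hx hx, hφ.1 x hx]
    have : H.commonFat x x = H.fatDeg x := by
      rw [HoffmanGraph.commonFat, HoffmanGraph.fatDeg]
      congr 1
      ext f
      simp only [Set.mem_setOf_eq]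
      tauto
    rw [this]
  · intro x y hx hy hadj
    rw [psi_inner_psi hφ hx hy, hφ.2.2.1 x y hadj]
  · intro x y hx hy hne hnadj
    rw [psi_inner_psi hφ hx hy, hφ.2.2.2 x y hne hnadj]
    ring

lemma psi_mem_lam (v : V) :
    psi H φ v ∈ Submodule.span ℤ (Set.range φ) := by
  unfold psi
  refine sub_mem (Submodule.subset_span ⟨v, rfl⟩) (Submodule.sum_mem _ ?_)
  intro f _
  by_cases h : H.graph.Adj v f.1
  · rw [if_pos h, one_smul]
    exact Submodule.subset_span ⟨f.1, rfl⟩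
  · rw [if_neg h, zero_smul]
    exact Submodule.zero_mem _

lemma lamred_le_lam :
    Submodule.span ℤ (psi H φ '' {v | H.IsSlim v}) ≤ Submodule.span ℤ (Set.range φ) := by
  rw [Submodule.span_le]
  rintro _ ⟨v, _, rfl⟩
  exact psi_mem_lam v

lemma lamred_inner_fat (hφ : H.IsRep m φ) {f : V} (hf : H.IsFat f)
    {w : EuclideanSpace ℝ (Fin d)}
    (hw : w ∈ Submodule.span ℤ (psi H φ '' {v | H.IsSlim v})) : ⟪w, φ f⟫ = 0 := by
  induction hw using Submodule.span_induction with
  | mem x hx =>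
    obtain ⟨v, hv, rfl⟩ := hx
    exact psi_inner_fat hφ hv hf
  | zero => simp
  | add x y _ _ ihx ihy => rw [inner_add_left, ihx, ihy, add_zero]
  | smul n x _ ih => rw [zsmul_inner, ih, mul_zero]

variable (H φ)

/-- The linear map from the direct sum to the lattice. -/
noncomputable def hmap :
    ((Submodule.span ℤ (psi H φ '' {v | H.IsSlim v})) × ({f : V // H.IsFat f} → ℤ)) →ₗ[ℤ]
      (Submodule.span ℤ (Set.range φ)) where
  toFun p := ⟨(p.1 : EuclideanSpace ℝ (Fin d)) + ∑ f : {f : V // H.IsFat f}, p.2 f • φ f.1,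
    add_mem (lamred_le_lam p.1.2)
      (Submodule.sum_mem _ (fun f _ =>
        Submodule.smul_mem _ (p.2 f) (Submodule.subset_span ⟨f.1, rfl⟩)))⟩
  map_add' p q := by
    ext1
    simp only [Submodule.coe_add, Prod.fst_add, Prod.snd_add, Pi.add_apply, add_smul,
      Finset.sum_add_distrib]
    abel
  map_smul' n p := by
    ext1
    simp only [Prod.smul_fst, Prod.smul_snd, Pi.smul_apply, smul_eq_mul,
      Submodule.coe_smul, RingHom.id_apply, SetLike.val_smul, smul_add, Finset.smul_sum,
      mul_smul]

lemma hmap_apply (p) :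
    ((hmap H φ p : Submodule.span ℤ (Set.range φ)) : EuclideanSpace ℝ (Fin d))
      = (p.1 : EuclideanSpace ℝ (Fin d)) + ∑ f : {f : V // H.IsFat f}, p.2 f • φ f.1 := rfl

variable {H φ}

lemma expand_inner (hφ : H.IsRep m φ)
    (w w' : Submodule.span ℤ (psi H φ '' {v | H.IsSlim v}))
    (a a' : {f : V // H.IsFat f} → ℤ) :
    ⟪(w : EuclideanSpace ℝ (Fin d)) + ∑ f : {f : V // H.IsFat f}, a f • φ f.1,
     (w' : EuclideanSpace ℝ (Fin d)) + ∑ f : {f : V // H.IsFat f}, a' f • φ f.1⟫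
      = ⟪(w : EuclideanSpace ℝ (Fin d)), (w' : EuclideanSpace ℝ (Fin d))⟫
        + ∑ f : {f : V // H.IsFat f}, (a f : ℝ) * (a' f : ℝ) := by
  rw [inner_add_left, inner_add_right, inner_add_right]
  have h1 : ⟪(w : EuclideanSpace ℝ (Fin d)), ∑ f : {f : V // H.IsFat f}, a' f • φ f.1⟫ = 0 := by
    rw [inner_sum]
    refine Finset.sum_eq_zero (fun f _ => ?_)
    rw [real_inner_comm, zsmul_inner, real_inner_comm, lamred_inner_fat hφ f.2 w.2, mul_zero]
  have h2 : ⟪∑ f : {f : V // H.IsFat f}, a f • φ f.1, (w' : EuclideanSpace ℝ (Fin d))⟫ = 0 := by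
    rw [sum_inner]
    refine Finset.sum_eq_zero (fun f _ => ?_)
    rw [zsmul_inner, real_inner_comm, lamred_inner_fat hφ f.2 w'.2, mul_zero]
  have h3 : ⟪∑ f : {f : V // H.IsFat f}, a f • φ f.1,
      ∑ f : {f : V // H.IsFat f}, a' f • φ f.1⟫
        = ∑ f : {f : V // H.IsFat f}, (a f : ℝ) * (a' f : ℝ) := by
    rw [sum_inner]
    refine Finset.sum_congr rfl (fun f _ => ?_)
    rw [inner_sum]
    have key : ∀ g : {f : V // H.IsFat f},
        ⟪a f • φ f.1, a' g • φ g.1⟫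
          = if g = f then (a f : ℝ) * (a' f : ℝ) else 0 := by
      intro g
      rw [real_inner_comm, zsmul_inner, real_inner_comm, zsmul_inner, ortho hφ f.2 g.2]
      by_cases h : g = f
      · subst h; simp [mul_comm]
      · have : f.1 ≠ g.1 := fun hh => h (Subtype.ext hh.symm)
        simp [h, this]
    rw [Finset.sum_congr rfl (fun g _ => key g), Finset.sum_ite_eq' Finset.univ]
    simp
  rw [h1, h2, h3]
  ring

lemma hmap_bijective (hφ : H.IsRep m φ) : Function.Bijective (hmap H φ) := by
  constructor
  · rw [injective_iff_map_eq_zero]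
    intro p hp
    have hp' : (p.1 : EuclideanSpace ℝ (Fin d))
        + ∑ f : {f : V // H.IsFat f}, p.2 f • φ f.1 = 0 := by
      have := congrArg (Subtype.val) hp
      simpa [hmap_apply] using this
    have ha : ∀ f₀ : {f : V // H.IsFat f}, (p.2 f₀ : ℝ) = 0 := by
      intro f₀
      have := congrArg (fun z => ⟪z, φ f₀.1⟫) hp'
      simp only [inner_add_left, sum_inner, inner_zero_left] at this
      rw [lamred_inner_fat hφ f₀.2 p.1.2, zero_add] at this
      have key : ∀ f : {f : V // H.IsFat f},
          ⟪p.2 f • φ f.1, φ f₀.1⟫ = if f = f₀ then (p.2 f₀ : ℝ) else 0 := by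
        intro f
        rw [zsmul_inner, ortho hφ f.2 f₀.2]
        by_cases h : f = f₀
        · subst h; simp
        · have : f.1 ≠ f₀.1 := fun hh => h (Subtype.ext hh)
          simp [h, this]
      rw [Finset.sum_congr rfl (fun f _ => key f), Finset.sum_ite_eq' Finset.univ] at this
      simpa using this
    have ha' : p.2 = 0 := by
      funext f₀
      exact_mod_cast ha f₀
    have hw : (p.1 : EuclideanSpace ℝ (Fin d)) = 0 := by
      rw [ha'] at hp'
      simpa using hp'
    have : p.1 = 0 := Subtype.ext hw
    rw [Prod.ext_iff]
    exact ⟨this, ha'⟩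
  · rintro ⟨u, hu⟩
    induction hu using Submodule.span_induction with
    | mem x hx =>
      obtain ⟨v, rfl⟩ := hx
      by_cases hv : H.IsFat v
      · refine ⟨⟨0, fun f => if f.1 = v then 1 else 0⟩, Subtype.ext ?_⟩
        rw [hmap_apply]
        simp only [Submodule.coe_zero, zero_add]
        have key : ∀ f : {f : V // H.IsFat f},
            (if f.1 = v then (1:ℤ) else 0) • φ f.1
              = if f = (⟨v, hv⟩ : {f : V // H.IsFat f}) then φ v else 0 := by
          intro f
          by_cases h : f = (⟨v, hv⟩ : {f : V // H.IsFat f})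
          · subst h; simp
          · have : f.1 ≠ v := fun hh => h (Subtype.ext hh)
            simp [h, this]
        rw [Finset.sum_congr rfl (fun f _ => key f), Finset.sum_ite_eq' Finset.univ]
        simp
      · refine ⟨⟨⟨psi H φ v, Submodule.subset_span ⟨v, hv, rfl⟩⟩,
          fun f => if H.graph.Adj v f.1 then 1 else 0⟩, Subtype.ext ?_⟩
        rw [hmap_apply]
        show psi H φ v + _ = φ v
        have hsum : ∑ f : {f : V // H.IsFat f}, (if H.graph.Adj v f.1 then (1:ℤ) else 0) • φ f.1
            = ∑ f : {f : V // H.IsFat f}, (if H.graph.Adj v f.1 then (1:ℝ) else 0) • φ f.1 := by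
          refine Finset.sum_congr rfl (fun f _ => ?_)
          by_cases h : H.graph.Adj v f.1 <;> simp [h]
        rw [hsum]
        unfold psi
        abel
    | zero => exact ⟨0, Subtype.ext (by rw [map_zero]; rfl)⟩
    | add x y hx hy ihx ihy =>
      obtain ⟨p, hp⟩ := ihx
      obtain ⟨q, hq⟩ := ihy
      refine ⟨p + q, Subtype.ext ?_⟩
      rw [map_add, hp, hq]
      rfl
    | smul n x hx ih =>
      obtain ⟨p, hp⟩ := ih
      refine ⟨n • p, Subtype.ext ?_⟩
      rw [map_smul, hp]
      rfl

end HG27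

end Aux

/-- Lemma 2.7: if a Hoffman graph has a representation of norm `m`, then it has a reduced
representation of norm `m`, and `Λ(𝔥,m) ≅ Λ^red(𝔥,m) ⊕ ℤ^{|V_f(𝔥)|}` as lattices
(i.e. there is a `ℤ`-linear equivalence turning the inner product into the orthogonal
direct sum of the inner product on `Λ^red(𝔥,m)` and the standard form on `ℤ^{|V_f(𝔥)|}`). -/
theorem representation_gives_reduced_representation_and_lattice_decomposition
    {V : Type} [Fintype V] (H : HoffmanGraph V) (m : ℝ) (d : ℕ)
    (φ : V → EuclideanSpace ℝ (Fin d)) (hφ : H.IsRep m φ) :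
    ∃ (e : ℕ) (ψ : V → EuclideanSpace ℝ (Fin e)), H.IsReducedRep m ψ ∧
      ∃ g : (Submodule.span ℤ (Set.range φ)) ≃ₗ[ℤ]
          ((Submodule.span ℤ (ψ '' {v | H.IsSlim v})) × ({f : V // H.IsFat f} → ℤ)),
        ∀ u v : Submodule.span ℤ (Set.range φ),
          ⟪(u : EuclideanSpace ℝ (Fin d)), (v : EuclideanSpace ℝ (Fin d))⟫ =
            ⟪((g u).1 : EuclideanSpace ℝ (Fin e)), ((g v).1 : EuclideanSpace ℝ (Fin e))⟫ +
              ∑ f : {f : V // H.IsFat f}, ((g u).2 f : ℝ) * ((g v).2 f : ℝ) := by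
  refine ⟨d, HG27.psi H φ, HG27.isReducedRep hφ, ?_⟩
  set heq := LinearEquiv.ofBijective (HG27.hmap H φ) (HG27.hmap_bijective hφ)
  refine ⟨heq.symm, ?_⟩
  intro u v
  have hu : (u : EuclideanSpace ℝ (Fin d))
      = ((heq.symm u).1 : EuclideanSpace ℝ (Fin d))
        + ∑ f : {f : V // H.IsFat f}, (heq.symm u).2 f • φ f.1 := by
    conv_lhs => rw [← heq.apply_symm_apply u]
    rfl
  have hv : (v : EuclideanSpace ℝ (Fin d))
      = ((heq.symm v).1 : EuclideanSpace ℝ (Fin d))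
        + ∑ f : {f : V // H.IsFat f}, (heq.symm v).2 f • φ f.1 := by
    conv_lhs => rw [← heq.apply_symm_apply v]
    rfl
  rw [hu, hv, HG27.expand_inner hφ]
end

section
/- Let 𝔊 be a Hoffman graph whose vertex set is partitioned as V₁ ∪ V₂ ∪ V₃ such that: (i) V₂ ∪ V₃ consists of slim vertices; (ii) there are no edges between V₁ and V₃; (iii) every vertex of V₂ is adjacent to every vertex of V₃; (iv) V₃ is a clique. Let 𝔥 be the Hoffman graph with vertex set V₁ ∪ V₂ ∪ {f}, where f is a new fat vertex adjacent exactly to all vertices of V₂, and with the induced edges and labels on V₁ ∪ V₂. If 𝔊 has a representation of norm m, then 𝔥 has a representation of norm m + (m − 1)|V₂| / (|V₃| + m − 1). -/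
attribute [local instance] Classical.propDecidable

open scoped RealInnerProductSpace

/-- Lemma 2.13 (the key step of Hoffman's limit theorem): if `𝔊` has vertex set
`V₁ ∪ V₂ ∪ V₃` with `V₂ ∪ V₃` slim, no edges between `V₁` and `V₃`, all edges between
`V₂` and `V₃`, `V₃` a clique, and `𝔊` has a representation of norm `m`, then the Hoffman
graph `𝔥` on `V₁ ∪ V₂` together with a new fat vertex adjacent to all of `V₂` has a
representation of norm `m + (m-1)|V₂|/(|V₃|+m-1)`. -/
theorem attach_fat_representation_of_clique {V : Type} [Fintype V] (G : HoffmanGraph V)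
    (V₁ V₂ V₃ : Set V)
    (hd12 : Disjoint V₁ V₂) (hd13 : Disjoint V₁ V₃) (hd23 : Disjoint V₂ V₃)
    (hunion : V₁ ∪ V₂ ∪ V₃ = Set.univ)
    (hslim : ∀ v ∈ V₂ ∪ V₃, G.IsSlim v)
    (hno13 : ∀ x ∈ V₁, ∀ y ∈ V₃, ¬ G.graph.Adj x y)
    (hall23 : ∀ x ∈ V₂, ∀ y ∈ V₃, G.graph.Adj x y)
    (hclique : ∀ x ∈ V₃, ∀ y ∈ V₃, x ≠ y → G.graph.Adj x y)
    (h3ne : V₃.Nonempty)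
    (m : ℝ) (d : ℕ) (φ : V → EuclideanSpace ℝ (Fin d)) (hφ : G.IsRep m φ)
    (H : HoffmanGraph (Option {v : V // v ∈ V₁ ∪ V₂}))
    (hadj : ∀ x y : {v : V // v ∈ V₁ ∪ V₂},
      H.graph.Adj (some x) (some y) ↔ G.graph.Adj x.1 y.1)
    (hadjf : ∀ x : {v : V // v ∈ V₁ ∪ V₂}, H.graph.Adj none (some x) ↔ x.1 ∈ V₂)
    (hfat : ∀ x : {v : V // v ∈ V₁ ∪ V₂}, H.IsFat (some x) ↔ G.IsFat x.1)
    (hfatnone : H.IsFat none) :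
    ∃ (e : ℕ) (φ' : Option {v : V // v ∈ V₁ ∪ V₂} → EuclideanSpace ℝ (Fin e)),
      H.IsRep (m + (m - 1) * V₂.ncard / (V₃.ncard + m - 1)) φ' := by
  
  classical
  obtain ⟨hnorm, hfnorm, hone, hzero⟩ := hφ
  -- V₂ is nonempty
  have hx2ex : ∃ x : {v : V // v ∈ V₁ ∪ V₂}, x.1 ∈ V₂ := by
    obtain ⟨yo, hyslim, hyadj⟩ := H.fat_slim_nbr hfatnone
    match yo with
    | none => exact absurd hyadj (H.graph.loopless.irrefl none)
    | some x => exact ⟨x, (hadjf x).mp hyadj⟩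
  obtain ⟨x₂, hx₂⟩ := hx2ex
  obtain ⟨z₃, hz₃⟩ := h3ne
  set T : Finset V := V₃.toFinset with hT
  have hmemT : ∀ z : V, z ∈ T ↔ z ∈ V₃ := fun z => Set.mem_toFinset
  have hTcard : T.card = V₃.ncard := (Set.ncard_eq_toFinset_card' V₃).symm
  set t : ℝ := (V₃.ncard : ℝ) with htdef
  set k : ℝ := (V₂.ncard : ℝ) with hkdef
  have ht1 : 1 ≤ t := by
    have h := (Set.ncard_pos (Set.toFinite V₃)).mpr ⟨z₃, hz₃⟩
    rw [htdef]; exact_mod_cast h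
  have hk1 : 1 ≤ k := by
    have h := (Set.ncard_pos (Set.toFinite V₂)).mpr ⟨x₂.1, hx₂⟩
    rw [hkdef]; exact_mod_cast h
  set s : EuclideanSpace ℝ (Fin d) := ∑ z ∈ T, φ z with hs
  -- inner products with s
  have hs1 : ∀ x ∈ V₁, ⟪φ x, s⟫ = 0 := by
    intro x hx
    rw [hs, inner_sum]
    refine Finset.sum_eq_zero fun z hz => ?_
    have hz3 : z ∈ V₃ := (hmemT z).mp hz
    refine hzero x z (fun h => ?_) (hno13 x hx z hz3)
    exact Set.disjoint_left.mp hd13 hx (h ▸ hz3)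
  have hs2 : ∀ x ∈ V₂, ⟪φ x, s⟫ = t := by
    intro x hx
    rw [hs, inner_sum,
      Finset.sum_congr rfl fun z hz => hone x z (hall23 x hx z ((hmemT z).mp hz)),
      Finset.sum_const, nsmul_eq_mul, mul_one, hTcard, htdef]
  have hss : ⟪s, s⟫ = t * (t + m - 1) := by
    rw [hs, sum_inner]
    have hrow : ∀ z ∈ T, ⟪φ z, ∑ z' ∈ T, φ z'⟫ = m + (t - 1) := by
      intro z hz
      have hz3 := (hmemT z).mp hz
      have herase : ∀ z' ∈ T.erase z, ⟪φ z, φ z'⟫ = 1 := by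
        intro z' hz'
        have h1 := Finset.mem_erase.mp hz'
        exact hone z z' (hclique z hz3 z' ((hmemT z').mp h1.2) (Ne.symm h1.1))
      have h1T : 1 ≤ T.card := Finset.card_pos.mpr ⟨z, hz⟩
      rw [inner_sum, ← Finset.add_sum_erase T _ hz,
        hnorm z (hslim z (Or.inr hz3)),
        Finset.sum_congr rfl herase, Finset.sum_const, nsmul_eq_mul, mul_one,
        Finset.card_erase_of_mem hz, Nat.cast_sub h1T, hTcard, Nat.cast_one, htdef]
    rw [Finset.sum_congr rfl hrow, Finset.sum_const, nsmul_eq_mul, hTcard, htdef]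
    ring
  -- bounds on m
  have hm0 : 0 ≤ m := by
    rw [← hnorm z₃ (hslim z₃ (Or.inr hz₃))]; exact real_inner_self_nonneg
  have hm1 : 1 ≤ m := by
    have h1 : ⟪φ x₂.1, φ z₃⟫ = 1 := hone _ _ (hall23 _ hx₂ _ hz₃)
    have h2 := real_inner_le_norm (φ x₂.1) (φ z₃)
    have hn1 : ‖φ x₂.1‖ * ‖φ x₂.1‖ = m := by
      rw [← real_inner_self_eq_norm_mul_norm, hnorm _ (hslim _ (Or.inl hx₂))]
    have hn2 : ‖φ z₃‖ * ‖φ z₃‖ = m := by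
      rw [← real_inner_self_eq_norm_mul_norm, hnorm _ (hslim _ (Or.inr hz₃))]
    nlinarith [norm_nonneg (φ x₂.1), norm_nonneg (φ z₃)]
  -- scalars
  set q : ℝ := t + m - 1 with hqdef
  have ht0 : (0:ℝ) < t := by linarith
  have hq : (0:ℝ) < q := by rw [hqdef]; linarith
  have htq : (0:ℝ) < t * q := mul_pos ht0 hq
  have hk0 : k ≠ 0 := by linarith
  set c : ℝ := (m - 1) / q with hcdef
  have hc0 : 0 ≤ c := div_nonneg (by linarith) hq.le
  set r : ℝ := Real.sqrt (t * q) with hrdef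
  have hr2 : r * r = t * q := Real.mul_self_sqrt htq.le
  have hr0 : (0:ℝ) < r := by rw [hrdef]; exact Real.sqrt_pos.mpr htq
  set α : ℝ := (r - t) / (t * q) with hαdef
  set a : ℝ := Real.sqrt (k * c) with hadef
  have ha2 : a * a = k * c := Real.mul_self_sqrt (mul_nonneg (by linarith) hc0)
  have hss' : ⟪s, s⟫ = t * q := by rw [hss, hqdef]
  have hαtq : α * (t * q) = r - t := by
    rw [hαdef]; field_simp
  have hB : r⁻¹ * (t + α * (t * q)) = 1 := by
    rw [hαtq]; field_simp; ring
  have hA : r⁻¹ * (r⁻¹ * (t * q)) = 1 := by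
    rw [← hr2]; field_simp
  have hC : 2 * (α * t) + α * α * (t * q) = c := by
    have h1 : (2 * (α * t) + α * α * (t * q)) * (t * q) = c * (t * q) := by
      have e2 : c * q = m - 1 := by rw [hcdef]; field_simp
      calc (2 * (α * t) + α * α * (t * q)) * (t * q)
          = 2 * t * (α * (t * q)) + (α * (t * q)) * (α * (t * q)) := by ring
        _ = 2 * t * (r - t) + (r - t) * (r - t) := by rw [hαtq]
        _ = r * r - t * t := by ring
        _ = t * q - t * t := by rw [hr2]
        _ = t * (q - t) := by ring
        _ = t * (m - 1) := by rw [hqdef]; ring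
        _ = (c * q) * t := by rw [e2]; ring
        _ = c * (t * q) := by ring
    exact mul_right_cancel₀ (ne_of_gt htq) h1
  -- second component vectors
  set uu : {v : V // v ∈ V₁ ∪ V₂} → EuclideanSpace ℝ {v : V // v ∈ V₁ ∪ V₂} := fun x => WithLp.toLp 2 (fun w =>
    if x.1 ∈ V₂ then a * ((if w = x then (1:ℝ) else 0) - (if w.1 ∈ V₂ then (1:ℝ) else 0) / k)
    else if G.IsFat x.1 then 0
    else a * (if w = x then (1:ℝ) else 0)) with huu
  have hinner2 : ∀ f g : EuclideanSpace ℝ {v : V // v ∈ V₁ ∪ V₂},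
      ⟪f, g⟫ = ∑ w, f w * g w := by
    intro f g
    rw [PiLp.inner_apply]; simp [RCLike.inner_apply, mul_comm]
  have hdelta : ∀ (x : {v : V // v ∈ V₁ ∪ V₂}) (f : {v : V // v ∈ V₁ ∪ V₂} → ℝ),
      ∑ w, (if w = x then (1:ℝ) else 0) * f w = f x := by
    intro x f; simp [ite_mul]
  have hchi_card : ∑ w : {v : V // v ∈ V₁ ∪ V₂}, (if w.1 ∈ V₂ then (1:ℝ) else 0) = k := by
    rw [Finset.sum_boole, hkdef]
    norm_cast
    rw [Set.ncard_eq_toFinset_card']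
    refine Finset.card_bij (fun w _ => w.1) ?_ ?_ ?_
    · intro w hw; rw [Set.mem_toFinset]; exact (Finset.mem_filter.mp hw).2
    · intro w1 h1 w2 h2 h; exact Subtype.ext h
    · intro v hv
      have hv2 : v ∈ V₂ := Set.mem_toFinset.mp hv
      exact ⟨⟨v, Or.inr hv2⟩, Finset.mem_filter.mpr ⟨Finset.mem_univ _, hv2⟩, rfl⟩
  -- inner products of the second components
  have QU22 : ∀ x y : {v : V // v ∈ V₁ ∪ V₂}, x.1 ∈ V₂ → y.1 ∈ V₂ →
      ⟪uu x, uu y⟫ = a * a * ((if x = y then (1:ℝ) else 0) - 1 / k) := by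
    intro x y hx hy
    rw [hinner2]
    have expand : ∀ w : {v : V // v ∈ V₁ ∪ V₂}, uu x w * uu y w =
        a * a * ((if w = x then (1:ℝ) else 0) * (if w = y then (1:ℝ) else 0))
        - (a * a / k) * ((if w = x then (1:ℝ) else 0) * (if w.1 ∈ V₂ then (1:ℝ) else 0))
        - (a * a / k) * ((if w = y then (1:ℝ) else 0) * (if w.1 ∈ V₂ then (1:ℝ) else 0))
        + (a * a / (k * k)) * ((if w.1 ∈ V₂ then (1:ℝ) else 0) * (if w.1 ∈ V₂ then (1:ℝ) else 0)) := by
      intro w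
      simp only [huu, PiLp.toLp_apply, if_pos hx, if_pos hy]
      ring
    rw [Finset.sum_congr rfl fun w _ => expand w]
    rw [Finset.sum_add_distrib, Finset.sum_sub_distrib, Finset.sum_sub_distrib,
      ← Finset.mul_sum, ← Finset.mul_sum, ← Finset.mul_sum, ← Finset.mul_sum]
    have h1 : ∑ w : {v : V // v ∈ V₁ ∪ V₂},
        (if w = x then (1:ℝ) else 0) * (if w = y then (1:ℝ) else 0)
        = (if x = y then (1:ℝ) else 0) := by
      rw [hdelta x (fun w => if w = y then (1:ℝ) else 0)]
    have h2 : ∑ w : {v : V // v ∈ V₁ ∪ V₂},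
        (if w = x then (1:ℝ) else 0) * (if w.1 ∈ V₂ then (1:ℝ) else 0) = 1 := by
      rw [hdelta x (fun w => if w.1 ∈ V₂ then (1:ℝ) else 0)]
      exact if_pos hx
    have h3 : ∑ w : {v : V // v ∈ V₁ ∪ V₂},
        (if w = y then (1:ℝ) else 0) * (if w.1 ∈ V₂ then (1:ℝ) else 0) = 1 := by
      rw [hdelta y (fun w => if w.1 ∈ V₂ then (1:ℝ) else 0)]
      exact if_pos hy
    have h4 : ∑ w : {v : V // v ∈ V₁ ∪ V₂},
        (if w.1 ∈ V₂ then (1:ℝ) else 0) * (if w.1 ∈ V₂ then (1:ℝ) else 0) = k := by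
      have hpoint : ∀ w : {v : V // v ∈ V₁ ∪ V₂},
          (if w.1 ∈ V₂ then (1:ℝ) else 0) * (if w.1 ∈ V₂ then (1:ℝ) else 0)
          = (if w.1 ∈ V₂ then (1:ℝ) else 0) := by
        intro w; by_cases h : w.1 ∈ V₂ <;> simp [h]
      rw [Finset.sum_congr rfl fun w _ => hpoint w]
      exact hchi_card
    rw [h1, h2, h3, h4]
    have hkk : a * a / (k * k) * k = a * a * (1 / k) := by
      field_simp
    rw [hkk]
    ring
  have QUfat : ∀ x y : {v : V // v ∈ V₁ ∪ V₂}, x.1 ∉ V₂ → G.IsFat x.1 →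
      ⟪uu x, uu y⟫ = 0 := by
    intro x y hx hxf
    rw [hinner2]
    refine Finset.sum_eq_zero fun w _ => ?_
    have : uu x w = 0 := by simp only [huu, PiLp.toLp_apply, if_neg hx, if_pos hxf]
    rw [this, zero_mul]
  have QUslimL : ∀ x y : {v : V // v ∈ V₁ ∪ V₂}, x.1 ∉ V₂ → ¬ G.IsFat x.1 →
      ⟪uu x, uu y⟫ = a * uu y x := by
    intro x y hx hxf
    rw [hinner2]
    have expand : ∀ w : {v : V // v ∈ V₁ ∪ V₂},
        uu x w * uu y w = a * ((if w = x then (1:ℝ) else 0) * uu y w) := by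
      intro w
      have : uu x w = a * (if w = x then (1:ℝ) else 0) := by
        simp only [huu, PiLp.toLp_apply, if_neg hx, if_neg hxf]
      rw [this]; ring
    rw [Finset.sum_congr rfl fun w _ => expand w, ← Finset.mul_sum,
      hdelta x (fun w => uu y w)]
  
  -- pointwise evaluations of uu
  have huu_eval2 : ∀ x w : {v : V // v ∈ V₁ ∪ V₂}, x.1 ∈ V₂ → w.1 ∉ V₂ → uu x w = 0 := by
    intro x w hx hw
    have hwx : w ≠ x := fun h => hw (h ▸ hx)
    simp only [huu, PiLp.toLp_apply, if_pos hx, if_neg hwx, if_neg hw]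
    simp
  have hcase : ∀ x : {v : V // v ∈ V₁ ∪ V₂}, x.1 ∈ V₂ ∨ (x.1 ∈ V₁ ∧ x.1 ∉ V₂) := by
    intro x
    rcases x.2 with h | h
    · exact Or.inr ⟨h, fun h2 => Set.disjoint_left.mp hd12 h h2⟩
    · exact Or.inl h
  have QUzero : ∀ x y : {v : V // v ∈ V₁ ∪ V₂}, x ≠ y → ¬(x.1 ∈ V₂ ∧ y.1 ∈ V₂) →
      ⟪uu x, uu y⟫ = 0 := by
    intro x y hxy hnot
    rcases hcase x with hx2 | ⟨hx1, hx2'⟩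
    · have hy2' : y.1 ∉ V₂ := fun h => hnot ⟨hx2, h⟩
      rw [real_inner_comm]
      by_cases hyf : G.IsFat y.1
      · exact QUfat y x hy2' hyf
      · rw [QUslimL y x hy2' hyf, huu_eval2 x y hx2 hy2', mul_zero]
    · by_cases hxf : G.IsFat x.1
      · exact QUfat x y hx2' hxf
      · rw [QUslimL x y hx2' hxf]
        rcases hcase y with hy2 | ⟨hy1, hy2'⟩
        · rw [huu_eval2 y x hy2 hx2', mul_zero]
        · by_cases hyf : G.IsFat y.1
          · have h0 : uu y x = 0 := by simp only [huu, PiLp.toLp_apply, if_neg hy2', if_pos hyf]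
            rw [h0, mul_zero]
          · have h0 : uu y x = a * (if x = y then (1:ℝ) else 0) := by
              simp only [huu, PiLp.toLp_apply, if_neg hy2', if_neg hyf]
            rw [h0, if_neg hxy, mul_zero, mul_zero]
  have QUneg : ∀ x y : {v : V // v ∈ V₁ ∪ V₂}, x ≠ y → x.1 ∈ V₂ → y.1 ∈ V₂ →
      ⟪uu x, uu y⟫ = -c := by
    intro x y hxy hx hy
    rw [QU22 x y hx hy, if_neg hxy, ha2]
    field_simp
    ring
  have QUdiag2 : ∀ x : {v : V // v ∈ V₁ ∪ V₂}, x.1 ∈ V₂ → ⟪uu x, uu x⟫ = k * c - c := by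
    intro x hx
    rw [QU22 x x hx hx, if_pos rfl, ha2]
    field_simp
  have QUdiag1 : ∀ x : {v : V // v ∈ V₁ ∪ V₂}, x.1 ∉ V₂ → ¬ G.IsFat x.1 →
      ⟪uu x, uu x⟫ = k * c := by
    intro x hx hxf
    rw [QUslimL x x hx hxf]
    have h0 : uu x x = a := by
      simp only [huu, PiLp.toLp_apply, if_neg hx, if_neg hxf]
      simp
    rw [h0, ha2]
  -- first-component expansion
  have hψexp : ∀ (x y : V) (cx cy : ℝ),
      ⟪φ x + cx • s, φ y + cy • s⟫ =
        ⟪φ x, φ y⟫ + cy * ⟪φ x, s⟫ + cx * ⟪φ y, s⟫ + cx * cy * ⟪s, s⟫ := by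
    intro x y cx cy
    rw [inner_add_left, inner_add_right, inner_add_right, real_inner_smul_left,
      real_inner_smul_left, real_inner_smul_right, real_inner_smul_right,
      real_inner_comm s (φ y)]
    ring
  -- the full representation in the product space
  set Φ : Option {v : V // v ∈ V₁ ∪ V₂} →
      WithLp 2 ((EuclideanSpace ℝ (Fin d)) × (EuclideanSpace ℝ {v : V // v ∈ V₁ ∪ V₂})) :=
    fun o => match o with
    | none => (WithLp.equiv 2 _).symm (r⁻¹ • s, 0)
    | some x => (WithLp.equiv 2 _).symm
        (φ x.1 + (if x.1 ∈ V₂ then α else 0) • s, uu x) with hΦ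
  have hPhiSS : ∀ x y : {v : V // v ∈ V₁ ∪ V₂}, ⟪Φ (some x), Φ (some y)⟫
      = ⟪φ x.1 + (if x.1 ∈ V₂ then α else 0) • s, φ y.1 + (if y.1 ∈ V₂ then α else 0) • s⟫
        + ⟪uu x, uu y⟫ := fun x y => rfl
  have hPhiNS : ∀ y : {v : V // v ∈ V₁ ∪ V₂}, ⟪Φ none, Φ (some y)⟫
      = ⟪r⁻¹ • s, φ y.1 + (if y.1 ∈ V₂ then α else 0) • s⟫
        + ⟪(0 : EuclideanSpace ℝ {v : V // v ∈ V₁ ∪ V₂}), uu y⟫ := fun y => rfl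
  have hPhiNN : ⟪Φ none, Φ none⟫
      = ⟪r⁻¹ • s, r⁻¹ • s⟫
        + ⟪(0 : EuclideanSpace ℝ {v : V // v ∈ V₁ ∪ V₂}),
            (0 : EuclideanSpace ℝ {v : V // v ∈ V₁ ∪ V₂})⟫ := rfl
  have hΦnn : ⟪Φ none, Φ none⟫ = 1 := by
    rw [hPhiNN, inner_zero_left, add_zero, real_inner_smul_left, real_inner_smul_right,
      hss']
    exact hA
  have hΦn2 : ∀ y : {v : V // v ∈ V₁ ∪ V₂}, y.1 ∈ V₂ → ⟪Φ none, Φ (some y)⟫ = 1 := by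
    intro y hy
    rw [hPhiNS, inner_zero_left, add_zero, if_pos hy, inner_add_right,
      real_inner_smul_left, real_inner_smul_left, real_inner_smul_right,
      real_inner_comm (φ y.1) s, hs2 y.1 hy, hss']
    rw [← mul_add]
    exact hB
  have hΦn1 : ∀ y : {v : V // v ∈ V₁ ∪ V₂}, y.1 ∈ V₁ → y.1 ∉ V₂ →
      ⟪Φ none, Φ (some y)⟫ = 0 := by
    intro y hy hy2
    rw [hPhiNS, inner_zero_left, add_zero, if_neg hy2, zero_smul, add_zero,
      real_inner_smul_left, real_inner_comm (φ y.1) s, hs1 y.1 hy, mul_zero]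
  have hΦoff : ∀ x y : {v : V // v ∈ V₁ ∪ V₂}, x ≠ y →
      ⟪Φ (some x), Φ (some y)⟫ = ⟪φ x.1, φ y.1⟫ := by
    intro x y hxy
    rw [hPhiSS, hψexp]
    rcases hcase x with hx2 | ⟨hx1, hx2'⟩
    · rcases hcase y with hy2 | ⟨hy1, hy2'⟩
      · rw [if_pos hx2, if_pos hy2, hs2 x.1 hx2, hs2 y.1 hy2, hss',
          QUneg x y hxy hx2 hy2]
        have := hC
        linarith
      · rw [if_pos hx2, if_neg hy2', hs1 y.1 hy1,
          QUzero x y hxy (fun h => hy2' h.2)]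
        ring
    · rcases hcase y with hy2 | ⟨hy1, hy2'⟩
      · rw [if_neg hx2', if_pos hy2, hs1 x.1 hx1,
          QUzero x y hxy (fun h => hx2' h.1)]
        ring
      · rw [if_neg hx2', if_neg hy2',
          QUzero x y hxy (fun h => hx2' h.1)]
        ring
  have hm' : m + (m - 1) * k / q = m + k * c := by
    rw [hcdef]; ring
  have hΦdiag_slim : ∀ x : {v : V // v ∈ V₁ ∪ V₂}, ¬ G.IsFat x.1 →
      ⟪Φ (some x), Φ (some x)⟫ = m + k * c := by
    intro x hxf
    rw [hPhiSS, hψexp]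
    rcases hcase x with hx2 | ⟨hx1, hx2'⟩
    · rw [if_pos hx2, hs2 x.1 hx2, hss', QUdiag2 x hx2,
        hnorm x.1 (hslim x.1 (Or.inl hx2))]
      have := hC
      linarith
    · rw [if_neg hx2', QUdiag1 x hx2' hxf, hnorm x.1 hxf]
      ring
  have hΦdiag_fat : ∀ x : {v : V // v ∈ V₁ ∪ V₂}, G.IsFat x.1 →
      ⟪Φ (some x), Φ (some x)⟫ = 1 := by
    intro x hxf
    have hx2' : x.1 ∉ V₂ := fun h => (hslim x.1 (Or.inl h)) hxf
    rw [hPhiSS, hψexp, if_neg hx2', QUfat x x hx2' hxf, hfnorm x.1 hxf]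
    ring
  -- transfer to a Euclidean space
  haveI : FiniteDimensional ℝ
      (WithLp 2 ((EuclideanSpace ℝ (Fin d)) × (EuclideanSpace ℝ {v : V // v ∈ V₁ ∪ V₂}))) :=
    inferInstance
  set B := stdOrthonormalBasis ℝ
    (WithLp 2 ((EuclideanSpace ℝ (Fin d)) × (EuclideanSpace ℝ {v : V // v ∈ V₁ ∪ V₂})))
    with hBdef
  refine ⟨_, fun o => B.repr (Φ o), ?_, ?_, ?_, ?_⟩
  · intro o ho
    match o with
    | none => exact absurd hfatnone ho
    | some x =>
      have hxs : ¬ G.IsFat x.1 := fun h => ho ((hfat x).mpr h)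
      rw [LinearIsometryEquiv.inner_map_map, hΦdiag_slim x hxs, ← hm']
  · intro o ho
    match o with
    | none => rw [LinearIsometryEquiv.inner_map_map]; exact hΦnn
    | some x =>
      rw [LinearIsometryEquiv.inner_map_map]
      exact hΦdiag_fat x ((hfat x).mp ho)
  · intro o1 o2 hA'
    match o1, o2 with
    | none, none => exact absurd hA' (H.graph.loopless.irrefl none)
    | none, some y =>
      rw [LinearIsometryEquiv.inner_map_map]
      exact hΦn2 y ((hadjf y).mp hA')
    | some x, none =>
      rw [LinearIsometryEquiv.inner_map_map, real_inner_comm]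
      exact hΦn2 x ((hadjf x).mp hA'.symm)
    | some x, some y =>
      have hGadj := (hadj x y).mp hA'
      have hxy : x ≠ y := fun h => G.graph.ne_of_adj hGadj (congrArg Subtype.val h)
      rw [LinearIsometryEquiv.inner_map_map, hΦoff x y hxy]
      exact hone _ _ hGadj
  · intro o1 o2 hne hA'
    match o1, o2 with
    | none, none => exact absurd rfl hne
    | none, some y =>
      have hy2' : y.1 ∉ V₂ := fun h => hA' ((hadjf y).mpr h)
      have hy1 : y.1 ∈ V₁ := by
        rcases hcase y with h | ⟨h, _⟩
        · exact absurd h hy2'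
        · exact h
      rw [LinearIsometryEquiv.inner_map_map]
      exact hΦn1 y hy1 hy2'
    | some x, none =>
      have hx2' : x.1 ∉ V₂ := fun h => hA' (((hadjf x).mpr h).symm)
      have hx1 : x.1 ∈ V₁ := by
        rcases hcase x with h | ⟨h, _⟩
        · exact absurd h hx2'
        · exact h
      rw [LinearIsometryEquiv.inner_map_map, real_inner_comm]
      exact hΦn1 x hx1 hx2'
    | some x, some y =>
      have hxy : x ≠ y := fun h => hne (congrArg some h)
      have hvne : x.1 ≠ y.1 := fun h => hxy (Subtype.ext h)
      have hGnadj : ¬ G.graph.Adj x.1 y.1 := fun h => hA' ((hadj x y).mpr h)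
      rw [LinearIsometryEquiv.inner_map_map, hΦoff x y hxy]
      exact hzero _ _ hvne hGnadj
end

section
/- Let 𝔥 be a fat Hoffman graph with smallest eigenvalue at least −3 and let ψ be a reduced representation of norm 3 of 𝔥. Then for any two distinct slim vertices x, y of 𝔥, the inner product (ψ(x), ψ(y)) belongs to {1, 0, −1}. -/
attribute [local instance] Classical.propDecidable

open scoped RealInnerProductSpace

/-- Lemma 3.6: if `𝔥` is a fat Hoffman graph with smallest eigenvalue at least `-3` and
`ψ` is a reduced representation of norm `3`, then for distinct slim vertices `x`, `y`
the inner product `(ψ(x), ψ(y))` lies in `{1, 0, -1}`. -/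
theorem reducedRep_inner_mem_of_fat {V : Type} [Fintype V] (H : HoffmanGraph V)
    (hfat : H.IsFatGraph) (hmin : -3 ≤ H.lambdaMin)
    {E : Type*} [NormedAddCommGroup E] [InnerProductSpace ℝ E]
    (ψ : V → E) (hψ : H.IsReducedRep 3 ψ) :
    ∀ x y, H.IsSlim x → H.IsSlim y → x ≠ y → ⟪ψ x, ψ y⟫ ∈ ({1, 0, -1} : Set ℝ) := by
  intro x y hx hy hne
  obtain ⟨hnorm, hadjv, hnadjv⟩ := hψ
  have hcx : H.commonFat x y ≤ H.fatDeg x := by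
    apply Set.ncard_le_ncard _ (Set.toFinite _)
    intro f hf; exact ⟨hf.1, hf.2.1⟩
  have hcy : H.commonFat x y ≤ H.fatDeg y := by
    apply Set.ncard_le_ncard _ (Set.toFinite _)
    intro f hf; exact ⟨hf.1, hf.2.2⟩
  have hdx : (H.fatDeg x : ℝ) ≤ 3 := by
    have h0 : (0 : ℝ) ≤ ⟪ψ x, ψ x⟫ := real_inner_self_nonneg
    rw [hnorm x hx] at h0; linarith
  have hdy : (H.fatDeg y : ℝ) ≤ 3 := by
    have h0 : (0 : ℝ) ≤ ⟪ψ y, ψ y⟫ := real_inner_self_nonneg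
    rw [hnorm y hy] at h0; linarith
  have hcxR : (H.commonFat x y : ℝ) ≤ (H.fatDeg x : ℝ) := by exact_mod_cast hcx
  have hcyR : (H.commonFat x y : ℝ) ≤ (H.fatDeg y : ℝ) := by exact_mod_cast hcy
  have CS := real_inner_mul_inner_self_le (ψ x) (ψ y)
  rw [hnorm x hx, hnorm y hy] at CS
  by_cases ha : H.graph.Adj x y
  · rw [hadjv x y hx hy ha] at CS ⊢
    have hc2 : H.commonFat x y ≤ 2 := by
      by_contra h
      push_neg at h
      have h3 : (3 : ℝ) ≤ (H.commonFat x y : ℝ) := by exact_mod_cast h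
      nlinarith [CS, hcxR, hcyR, hdx, hdy]
    interval_cases h : H.commonFat x y <;> norm_num
  · rw [hnadjv x y hx hy hne ha] at CS ⊢
    have hc1 : H.commonFat x y ≤ 1 := by
      by_contra h
      push_neg at h
      have h2 : (2 : ℝ) ≤ (H.commonFat x y : ℝ) := by exact_mod_cast h
      nlinarith [CS, hcxR, hcyR, hdx, hdy]
    interval_cases h : H.commonFat x y <;> norm_num
end

section
/- Let 𝔥 be a fat indecomposable (−3)-saturated Hoffman graph whose reduced representation ψ of norm 3 takes values in the standard lattice ℤⁿ. Suppose slim vertices s, t⁺, t⁻ share a common fat neighbor and are represented as ψ(s) = e₁ + e₂ and ψ(t^±) = −e₁ ± e₃ (where e_i are standard basis vectors of ℤⁿ). If there exists a slim vertex t with ψ(t) = −e₂ + e_j for some j ∉ {1, 2, 3}, then both t⁺ and t⁻ have s as their unique neighbor in S^−(𝔥). -/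
attribute [local instance] Classical.propDecidable

open scoped RealInnerProductSpace

section AuxLemmas

variable {V : Type} [Fintype V]

lemma aux_commonFat_le_fatDeg (H : HoffmanGraph V) (x y : V) :
    H.commonFat x y ≤ H.fatDeg x :=
  Set.ncard_le_ncard (fun f hf => ⟨hf.1, hf.2.1⟩) (Set.toFinite _)

lemma aux_one_le_fatDeg (H : HoffmanGraph V) {x g : V} (hg : H.IsFat g)
    (hadj : H.graph.Adj x g) : 1 ≤ H.fatDeg x :=
  (Set.ncard_pos (Set.toFinite _)).mpr ⟨g, hg, hadj⟩

lemma aux_one_le_commonFat (H : HoffmanGraph V) {x y g : V} (hg : H.IsFat g)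
    (hx : H.graph.Adj x g) (hy : H.graph.Adj y g) : 1 ≤ H.commonFat x y :=
  (Set.ncard_pos (Set.toFinite _)).mpr ⟨g, hg, hx, hy⟩

lemma aux_uniq_fat (H : HoffmanGraph V) {x g : V} (h1 : H.fatDeg x = 1)
    (hg : H.IsFat g) (hxg : H.graph.Adj x g) :
    ∀ f, H.IsFat f → H.graph.Adj x f → f = g := by
  intro f hf hxf
  unfold HoffmanGraph.fatDeg at h1
  obtain ⟨a, ha⟩ := Set.ncard_eq_one.mp h1
  have hg' : g ∈ {f : V | H.IsFat f ∧ H.graph.Adj x f} := ⟨hg, hxg⟩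
  have hf' : f ∈ {f : V | H.IsFat f ∧ H.graph.Adj x f} := ⟨hf, hxf⟩
  rw [ha, Set.mem_singleton_iff] at hg' hf'
  rw [hf', hg']

/-- If `x` has exactly one fat neighbor `g` and `x, y` have a common fat neighbor,
then `g` is adjacent to `y`. -/
lemma aux_adj_of_commonFat (H : HoffmanGraph V) {x y g : V} (h1 : H.fatDeg x = 1)
    (hg : H.IsFat g) (hxg : H.graph.Adj x g) (hc : 1 ≤ H.commonFat x y) :
    H.graph.Adj y g := by
  have hne : ({f : V | H.IsFat f ∧ H.graph.Adj x f ∧ H.graph.Adj y f} : Set V).Nonempty := by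
    unfold HoffmanGraph.commonFat at hc
    rw [← Set.ncard_pos (Set.toFinite _)]; omega
  obtain ⟨f, hf, hxf, hyf⟩ := hne
  have := aux_uniq_fat H h1 hg hxg f hf hxf
  rwa [this] at hyf

set_option maxHeartbeats 1000000 in
lemma aux_key {V : Type} [Fintype V] (H : HoffmanGraph V) (hfat : H.IsFatGraph)
    {n : ℕ} (ψ : V → EuclideanSpace ℝ (Fin n)) (hψ : H.IsReducedRep 3 ψ)
    (hint : ∀ v, H.IsSlim v → ∀ i, ∃ k : ℤ, ψ v i = (k : ℝ))
    (s tp tm t g : V) (hs : H.IsSlim s) (htp : H.IsSlim tp) (htm : H.IsSlim tm)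
    (ht : H.IsSlim t)
    (hgf : H.IsFat g) (hgs : H.graph.Adj s g) (hgtp : H.graph.Adj tp g)
    (hgtm : H.graph.Adj tm g)
    (i₁ i₂ i₃ j : Fin n) (h12 : i₁ ≠ i₂) (h13 : i₁ ≠ i₃) (h23 : i₂ ≠ i₃)
    (hj1 : j ≠ i₁) (hj2 : j ≠ i₂) (hj3 : j ≠ i₃)
    (ε : ℝ) (hε : ε * ε = 1)
    (hψs : ψ s = EuclideanSpace.single i₁ 1 + EuclideanSpace.single i₂ 1)
    (hψtp : ψ tp = -EuclideanSpace.single i₁ 1 + EuclideanSpace.single i₃ ε)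
    (hψtm : ψ tm = -EuclideanSpace.single i₁ 1 - EuclideanSpace.single i₃ ε)
    (hψt : ψ t = -EuclideanSpace.single i₂ 1 + EuclideanSpace.single j 1) :
    H.specialMinus.neighborSet ⟨tp, htp⟩ = {⟨s, hs⟩} := by
  classical
  have hsingle : ∀ (x : EuclideanSpace ℝ (Fin n)) (k : Fin n) (a : ℝ),
      ⟪x, EuclideanSpace.single k a⟫ = a * x k := by
    intro x k a
    rw [EuclideanSpace.inner_single_right]
    simp
  -- inner product formulas
  have f_s : ∀ v, ⟪ψ v, ψ s⟫ = ψ v i₁ + ψ v i₂ := by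
    intro v; rw [hψs, inner_add_right, hsingle, hsingle]; ring
  have f_tp : ∀ v, ⟪ψ v, ψ tp⟫ = -ψ v i₁ + ε * ψ v i₃ := by
    intro v; rw [hψtp, inner_add_right, inner_neg_right, hsingle, hsingle]; ring
  have f_tm : ∀ v, ⟪ψ v, ψ tm⟫ = -ψ v i₁ - ε * ψ v i₃ := by
    intro v; rw [hψtm, inner_sub_right, inner_neg_right, hsingle, hsingle]; ring
  have f_t : ∀ v, ⟪ψ v, ψ t⟫ = -ψ v i₂ + ψ v j := by
    intro v; rw [hψt, inner_add_right, inner_neg_right, hsingle, hsingle]; ring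
  -- coordinates
  have cs1 : ψ s i₁ = 1 := by
    rw [hψs]; simp [PiLp.add_apply, EuclideanSpace.single_apply, h12]
  have cs2 : ψ s i₂ = 1 := by
    rw [hψs]; simp [PiLp.add_apply, EuclideanSpace.single_apply, h12.symm]
  have cs3 : ψ s i₃ = 0 := by
    rw [hψs]; simp [PiLp.add_apply, EuclideanSpace.single_apply, h13.symm, h23.symm]
  have csj : ψ s j = 0 := by
    rw [hψs]; simp [PiLp.add_apply, EuclideanSpace.single_apply, hj1, hj2]
  have cp1 : ψ tp i₁ = -1 := by
    rw [hψtp]; simp [PiLp.add_apply, PiLp.neg_apply, EuclideanSpace.single_apply, h13]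
  have cp2 : ψ tp i₂ = 0 := by
    rw [hψtp]; simp [PiLp.add_apply, PiLp.neg_apply, EuclideanSpace.single_apply, h12.symm, h23]
  have cp3 : ψ tp i₃ = ε := by
    rw [hψtp]; simp [PiLp.add_apply, PiLp.neg_apply, EuclideanSpace.single_apply, h13.symm]
  have cpj : ψ tp j = 0 := by
    rw [hψtp]; simp [PiLp.add_apply, PiLp.neg_apply, EuclideanSpace.single_apply, hj1, hj3]
  have cm1 : ψ tm i₁ = -1 := by
    rw [hψtm]; simp [PiLp.sub_apply, PiLp.neg_apply, EuclideanSpace.single_apply, h13]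
  have cm2 : ψ tm i₂ = 0 := by
    rw [hψtm]; simp [PiLp.sub_apply, PiLp.neg_apply, EuclideanSpace.single_apply, h12.symm, h23]
  have cm3 : ψ tm i₃ = -ε := by
    rw [hψtm]; simp [PiLp.sub_apply, PiLp.neg_apply, EuclideanSpace.single_apply, h13.symm]
  have cmj : ψ tm j = 0 := by
    rw [hψtm]; simp [PiLp.sub_apply, PiLp.neg_apply, EuclideanSpace.single_apply, hj1, hj3]
  have ct1 : ψ t i₁ = 0 := by
    rw [hψt]; simp [PiLp.add_apply, PiLp.neg_apply, EuclideanSpace.single_apply, h12, hj1.symm]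
  have ct2 : ψ t i₂ = -1 := by
    rw [hψt]; simp [PiLp.add_apply, PiLp.neg_apply, EuclideanSpace.single_apply, hj2.symm]
  have ct3 : ψ t i₃ = 0 := by
    rw [hψt]; simp [PiLp.add_apply, PiLp.neg_apply, EuclideanSpace.single_apply, h23.symm, hj3.symm]
  have ctj : ψ t j = 1 := by
    rw [hψt]; simp [PiLp.add_apply, PiLp.neg_apply, EuclideanSpace.single_apply, hj2]
  -- self inner products and degrees
  have Sss : ⟪ψ s, ψ s⟫ = 2 := by rw [f_s s, cs1, cs2]; norm_num
  have Stt : ⟪ψ t, ψ t⟫ = 2 := by rw [f_t t, ct2, ctj]; norm_num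
  have Spp : ⟪ψ tp, ψ tp⟫ = 2 := by rw [f_tp tp, cp1, cp3]; linear_combination hε
  have fds : H.fatDeg s = 1 := by
    have h := hψ.1 s hs
    rw [Sss] at h
    have : (H.fatDeg s : ℝ) = 1 := by linarith
    exact_mod_cast this
  have fdtp : H.fatDeg tp = 1 := by
    have h := hψ.1 tp htp
    rw [Spp] at h
    have : (H.fatDeg tp : ℝ) = 1 := by linarith
    exact_mod_cast this
  -- various inner products
  have ip_s_tp : ⟪ψ s, ψ tp⟫ = -1 := by rw [f_tp s, cs1, cs3]; ring
  have ip_tp_tm : ⟪ψ tp, ψ tm⟫ = 0 := by rw [f_tm tp, cp1, cp3]; linear_combination -hε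
  have ip_tp_t : ⟪ψ tp, ψ t⟫ = 0 := by rw [f_t tp, cp2, cpj]; ring
  have ip_s_t : ⟪ψ s, ψ t⟫ = -1 := by rw [f_t s, cs2, csj]; ring
  -- s ≠ tp, s ≠ t
  have hstp : s ≠ tp := by
    intro h; rw [h] at ip_s_tp; rw [Spp] at ip_s_tp; norm_num at ip_s_tp
  have hst : s ≠ t := by
    intro h; rw [h] at ip_s_t; rw [Stt] at ip_s_t; norm_num at ip_s_t
  -- g is adjacent to t
  have hgt : H.graph.Adj t g := by
    have hc : 1 ≤ H.commonFat s t := by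
      by_cases hA : H.graph.Adj s t
      · have h := hψ.2.1 s t hs ht hA
        rw [ip_s_t] at h
        have hle : H.commonFat s t ≤ 1 := fds ▸ aux_commonFat_le_fatDeg H s t
        have : (H.commonFat s t : ℝ) = 2 := by linarith
        have : H.commonFat s t = 2 := by exact_mod_cast this
        omega
      · have h := hψ.2.2 s t hs ht hst hA
        rw [ip_s_t] at h
        have : (H.commonFat s t : ℝ) = 1 := by linarith
        have : H.commonFat s t = 1 := by exact_mod_cast this
        omega
    exact aux_adj_of_commonFat H fds hgf hgs hc
  -- main extensionality argument
  ext w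
  obtain ⟨u, hu⟩ := w
  simp only [SimpleGraph.mem_neighborSet, Set.mem_singleton_iff]
  constructor
  · intro hadj
    change _ ∧ _ at hadj
    obtain ⟨hne, hd⟩ := hadj
    have hutp : u ≠ tp := by
      intro h; exact hne (Subtype.ext h.symm)
    -- the inner product ⟪ψ tp, ψ u⟫ equals -1, and g is adjacent to u
    have hle1 : H.commonFat tp u ≤ 1 := fdtp ▸ aux_commonFat_le_fatDeg H tp u
    have hval : ⟪ψ tp, ψ u⟫ = -1 ∧ 1 ≤ H.commonFat tp u := by
      rcases hd with ⟨hA, hlt⟩ | ⟨hA, hlt⟩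
      · exfalso
        have : (H.commonFat tp u : ℝ) ≤ 1 := by exact_mod_cast hle1
        linarith
      · have h := hψ.2.2 tp u htp hu (Ne.symm hutp) hA
        have h1 : 1 ≤ H.commonFat tp u := by
          by_contra hcon
          have : H.commonFat tp u = 0 := by omega
          rw [this] at hlt; norm_num at hlt
        have : H.commonFat tp u = 1 := by omega
        rw [this] at h
        exact ⟨by rw [h]; norm_num, h1⟩
    have hgu : H.graph.Adj u g := aux_adj_of_commonFat H fdtp hgf hgtp hval.2
    -- distinctness of u from tm and t
    have hutm : u ≠ tm := by
      intro h
      rw [h] at hval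
      rw [ip_tp_tm] at hval
      norm_num at hval
    have hut : u ≠ t := by
      intro h
      rw [h] at hval
      rw [ip_tp_t] at hval
      norm_num at hval
    -- show u = s
    have hus : u = s := by
      by_contra hus
      have le0 : ∀ x, H.IsSlim x → u ≠ x → H.graph.Adj x g → ⟪ψ u, ψ x⟫ ≤ 0 := by
        intro x hx hux hxg
        have h1 : 1 ≤ H.commonFat u x := aux_one_le_commonFat H hgf hgu hxg
        have h1' : (1 : ℝ) ≤ H.commonFat u x := by exact_mod_cast h1
        by_cases hA : H.graph.Adj u x
        · rw [hψ.2.1 u x hu hx hA]; linarith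
        · rw [hψ.2.2 u x hu hx hux hA]; linarith
      have e_s : ψ u i₁ + ψ u i₂ ≤ 0 := by
        have h := le0 s hs hus hgs; rwa [f_s u] at h
      have e_tm : -ψ u i₁ - ε * ψ u i₃ ≤ 0 := by
        have h := le0 tm htm hutm hgtm; rwa [f_tm u] at h
      have e_t : -ψ u i₂ + ψ u j ≤ 0 := by
        have h := le0 t ht hut hgt; rwa [f_t u] at h
      have e_tp : -ψ u i₁ + ε * ψ u i₃ = -1 := by
        rw [← f_tp u, real_inner_comm]; exact hval.1
      obtain ⟨ka, hka⟩ := hint u hu i₁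
      have ha1 : (1 : ℝ) ≤ ψ u i₁ := by
        have h2 : (1 : ℝ) ≤ 2 * ψ u i₁ := by linarith
        rw [hka] at h2 ⊢
        have h3 : (1 : ℤ) ≤ 2 * ka := by exact_mod_cast h2
        exact_mod_cast (by omega : (1 : ℤ) ≤ ka)
      have hb : ψ u i₂ ≤ -1 := by linarith
      have hd' : ψ u j ≤ -1 := by linarith
      have hn : ⟪ψ u, ψ u⟫ ≤ 2 := by
        rw [hψ.1 u hu]
        obtain ⟨f, hf, hadj'⟩ := hfat u hu
        have h1 : 1 ≤ H.fatDeg u := aux_one_le_fatDeg H hf hadj'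
        have : (1 : ℝ) ≤ H.fatDeg u := by exact_mod_cast h1
        linarith
      have hsum : (ψ u i₁) ^ 2 + (ψ u i₂) ^ 2 + (ψ u j) ^ 2 ≤ ⟪ψ u, ψ u⟫ := by
        have heq : ⟪ψ u, ψ u⟫ = ∑ i, (ψ u i) ^ 2 := by
          rw [PiLp.inner_apply]
          simp [sq]
        rw [heq]
        have hsub : ({i₁, i₂, j} : Finset (Fin n)) ⊆ Finset.univ := Finset.subset_univ _
        have := Finset.sum_le_sum_of_subset_of_nonneg hsub
          (fun i _ _ => sq_nonneg (ψ u i))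
        calc (ψ u i₁) ^ 2 + (ψ u i₂) ^ 2 + (ψ u j) ^ 2
            = ∑ i ∈ ({i₁, i₂, j} : Finset (Fin n)), (ψ u i) ^ 2 := by
              rw [Finset.sum_insert (by simp [h12, hj1.symm]),
                Finset.sum_insert (by simp [hj2.symm]), Finset.sum_singleton]
              ring
          _ ≤ ∑ i, (ψ u i) ^ 2 := this
      nlinarith [sq_nonneg (ψ u i₁ - 1), sq_nonneg (ψ u i₂ + 1), sq_nonneg (ψ u j + 1)]
    exact Subtype.ext hus
  · intro hw
    rw [hw]
    have hnetps : tp ≠ s := Ne.symm hstp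
    change _ ∧ _
    refine ⟨fun h => hnetps (congrArg Subtype.val h), ?_⟩
    have hv : ⟪ψ tp, ψ s⟫ = -1 := by rw [real_inner_comm]; exact ip_s_tp
    by_cases hA : H.graph.Adj tp s
    · left
      refine ⟨hA, ?_⟩
      have h := hψ.2.1 tp s htp hs hA
      rw [hv] at h
      linarith
    · right
      refine ⟨hA, ?_⟩
      have h := hψ.2.2 tp s htp hs hnetps hA
      rw [hv] at h
      linarith

end AuxLemmas

/-- Lemma 4.7: suppose slim vertices `s, t⁺, t⁻` share a common fat neighbor and are
represented as `ψ(s) = e₁ + e₂`, `ψ(t^±) = -e₁ ± e₃`.  If some slim vertex `t` has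
`ψ(t) = -e₂ + e_j` with `j ∉ {1,2,3}`, then `t⁺` and `t⁻` have `s` as their unique
neighbor in `S⁻(𝔥)`. -/
theorem unique_specialMinus_neighbor_of_configuration {V : Type} [Fintype V]
    (H : HoffmanGraph V) (hfat : H.IsFatGraph) (hind : H.Indecomposable)
    (hsat : H.IsSaturated (-3))
    (n : ℕ) (ψ : V → EuclideanSpace ℝ (Fin n)) (hψ : H.IsReducedRep 3 ψ)
    (hint : ∀ v, H.IsSlim v → ∀ i, ∃ k : ℤ, ψ v i = (k : ℝ))
    (s tp tm t : V) (hs : H.IsSlim s) (htp : H.IsSlim tp) (htm : H.IsSlim tm)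
    (ht : H.IsSlim t)
    (hcommon : ∃ g, H.IsFat g ∧ H.graph.Adj s g ∧ H.graph.Adj tp g ∧ H.graph.Adj tm g)
    (i₁ i₂ i₃ j : Fin n) (h12 : i₁ ≠ i₂) (h13 : i₁ ≠ i₃) (h23 : i₂ ≠ i₃)
    (hj1 : j ≠ i₁) (hj2 : j ≠ i₂) (hj3 : j ≠ i₃)
    (hψs : ψ s = EuclideanSpace.single i₁ 1 + EuclideanSpace.single i₂ 1)
    (hψtp : ψ tp = -EuclideanSpace.single i₁ 1 + EuclideanSpace.single i₃ 1)
    (hψtm : ψ tm = -EuclideanSpace.single i₁ 1 - EuclideanSpace.single i₃ 1)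
    (hψt : ψ t = -EuclideanSpace.single i₂ 1 + EuclideanSpace.single j 1) :
    H.specialMinus.neighborSet ⟨tp, htp⟩ = {⟨s, hs⟩} ∧
    H.specialMinus.neighborSet ⟨tm, htm⟩ = {⟨s, hs⟩} := by
  obtain ⟨g, hgf, hgs, hgtp, hgtm⟩ := hcommon
  have hneg : (EuclideanSpace.single i₃ (-1 : ℝ)) = -EuclideanSpace.single i₃ 1 := by
    ext k
    simp only [EuclideanSpace.single_apply, PiLp.neg_apply]
    split <;> norm_num
  constructor
  · exact aux_key H hfat ψ hψ hint s tp tm t g hs htp htm ht hgf hgs hgtp hgtm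
      i₁ i₂ i₃ j h12 h13 h23 hj1 hj2 hj3 1 (by norm_num) hψs hψtp hψtm hψt
  · refine aux_key H hfat ψ hψ hint s tm tp t g hs htm htp ht hgf hgs hgtm hgtp
      i₁ i₂ i₃ j h12 h13 h23 hj1 hj2 hj3 (-1) (by norm_num) hψs ?_ ?_ hψt
    · rw [hψtm, hneg]; abel
    · rw [hψtp, hneg]; abel
end
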